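/- Let g₁, g₂ be real numbers with 0 < g₂² < g₁², and define the bilinear form ⟨X,Y⟩ := tr(X·Y) − (1/3)·(1 − g₁²/g₂²)·tr(X)·tr(Y) on 3×3 complex matrices. Then for every Hermitian 3×3 complex matrix X ≠ 0, the value ⟨X,X⟩ is a real number and ⟨X,X⟩ > 0. -/
import Mathlib

/-- For real parameters `g₁, g₂` with `0 < g₂² < g₁²`, the bilinear form
`⟨X,Y⟩ = tr(XY) - (1/3)(1 - g₁²/g₂²) tr(X) tr(Y)` is positive definite on
Hermitian `3 × 3` complex matrices. -/
theorem inner_product_pos_def (g₁ g₂ : ℝ) (h₂ : 0 < g₂ ^ 2) (h₁₂ : g₂ ^ 2 < g₁ ^ 2)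
    (X : Matrix (Fin 3) (Fin 3) ℂ) (hX : X.IsHermitian) (hX0 : X ≠ 0) :
    ∃ r : ℝ,
      Matrix.trace (X * X)
          - (1 / 3 : ℂ) * ((1 : ℂ) - (g₁ : ℂ) ^ 2 / (g₂ : ℂ) ^ 2)
            * Matrix.trace X * Matrix.trace X = (r : ℂ) ∧ 0 < r := by
  set k : ℝ := g₁ ^ 2 / g₂ ^ 2 with hk
  have hk1 : 1 < k := (one_lt_div h₂).mpr h₁₂
  -- trace X is real
  set t : ℝ := ∑ i, (X i i).re with ht
  have htr : Matrix.trace X = (t : ℂ) := by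
    rw [Matrix.trace, ht]
    push_cast
    refine Finset.sum_congr rfl fun i _ => ?_
    exact (hX.coe_re_apply_self i).symm
  -- trace (X*X) is a sum of squared norms
  set s : ℝ := ∑ i, ∑ j, Complex.normSq (X i j) with hs
  have hXX : Matrix.trace (X * X) = (s : ℂ) := by
    rw [Matrix.trace, hs]
    push_cast
    refine Finset.sum_congr rfl fun i _ => ?_
    simp only [Matrix.diag_apply, Matrix.mul_apply]
    refine Finset.sum_congr rfl fun j _ => ?_
    rw [← hX.apply j i]
    exact Complex.mul_conj _
  have hs0 : 0 < s := by
    have hne : ∃ i j, X i j ≠ 0 := by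
      by_contra h
      push_neg at h
      exact hX0 (by ext i j; simpa using h i j)
    obtain ⟨i, j, hij⟩ := hne
    have : 0 < Complex.normSq (X i j) := Complex.normSq_pos.mpr hij
    rw [hs]
    have h1 : 0 < ∑ j', Complex.normSq (X i j') :=
      Finset.sum_pos' (fun _ _ => Complex.normSq_nonneg _) ⟨j, Finset.mem_univ j, this⟩
    exact Finset.sum_pos' (fun i' _ => Finset.sum_nonneg fun _ _ => Complex.normSq_nonneg _)
      ⟨i, Finset.mem_univ i, h1⟩
  refine ⟨s + (g₁ ^ 2 / g₂ ^ 2 - 1) * t ^ 2 / 3, ?_, ?_⟩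
  · rw [hXX, htr]
    push_cast
    ring
  · have h1 : 0 ≤ (g₁ ^ 2 / g₂ ^ 2 - 1) * t ^ 2 / 3 := by
      have := sq_nonneg t
      nlinarith [hk1]
    linarith
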